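/- Identity theorem for polar-analytic functions: let D ⊆ H be a nonempty open connected set, let f : D → ℂ be polar-analytic on D, and suppose (r₀,θ₀) ∈ D is an accumulation point of distinct zeros of f, i.e. there exists a sequence (r_n,θ_n) ∈ D of zeros of f with (r_n,θ_n) ≠ (r₀,θ₀) for all n and (r_n,θ_n) → (r₀,θ₀). Then f is identically zero on D. -/

import Mathlib

open MeasureTheory Filter Complex ENNReal

noncomputable section

/-- The right half-plane `H = {(r,θ) : r > 0}`. -/
def polarHalfPlane : Set (ℝ × ℝ) := {p : ℝ × ℝ | 0 < p.1}

/-- `f` has polar derivative `L` at `p`, the limit being taken within `D`. -/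
def HasPolarDerivAt (f : ℝ × ℝ → ℂ) (D : Set (ℝ × ℝ)) (p : ℝ × ℝ) (L : ℂ) : Prop :=
  Tendsto (fun q : ℝ × ℝ =>
      (f q - f p) /
        ((q.1 : ℂ) * Complex.exp (Complex.I * (q.2 : ℂ)) -
         (p.1 : ℂ) * Complex.exp (Complex.I * (p.2 : ℂ))))
    (nhdsWithin p (D \ {p})) (nhds L)

/-- `f` is polar-analytic on `D`. -/
def PolarAnalyticOn (f : ℝ × ℝ → ℂ) (D : Set (ℝ × ℝ)) : Prop :=
  ∀ p ∈ D, ∃ L : ℂ, HasPolarDerivAt f D p L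

/-- The polar Mellin derivative `Θ_c f = r ∂f/∂r + c f`. -/
def mellinPolarDeriv (c : ℝ) (f : ℝ × ℝ → ℂ) : ℝ × ℝ → ℂ :=
  fun p => (p.1 : ℂ) * deriv (fun r : ℝ => f (r, p.2)) p.1 + (c : ℂ) * f p

/-- The `X_c^p` norm. -/
def XNorm (c : ℝ) (p : ℝ≥0∞) (φ : ℝ → ℂ) : ℝ≥0∞ :=
  if p = ⊤ then ⨆ r : {r : ℝ // 0 < r}, ENNReal.ofReal ((r : ℝ) ^ c * ‖φ r‖)
  else (∫⁻ r in Set.Ioi (0 : ℝ),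
          ENNReal.ofReal ((r ^ c * ‖φ r‖) ^ p.toReal / r)) ^ (1 / p.toReal)

/-- Membership in the Mellin–Bernstein space `B^p_{c,T}`. -/
def MemMellinBernstein (p : ℝ≥0∞) (c T : ℝ) (f : ℝ × ℝ → ℂ) : Prop :=
  PolarAnalyticOn f polarHalfPlane ∧
  XNorm c p (fun r => f (r, 0)) < ⊤ ∧
  ∃ C : ℝ, 0 < C ∧ ∀ r θ : ℝ, 0 < r → r ^ c * ‖f (r, θ)‖ ≤ C * Real.exp (T * |θ|)

/-- The polar disk `E((r₀,θ₀),ρ)`. -/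
def polarDisk (p : ℝ × ℝ) (ρ : ℝ) : Set (ℝ × ℝ) :=
  {q : ℝ × ℝ | 0 < q.1 ∧
    ‖((Real.log (q.1 / p.1) : ℂ) + Complex.I * ((q.2 - p.2 : ℝ) : ℂ))‖ < ρ}

/-- The polar contour integral along the positively oriented boundary of
`[a,b] × [α,β]`:  `∮ g(r,θ) e^{iθ} (dr + i r dθ)`. -/
def rectPolarIntegral (a b α β : ℝ) (g : ℝ × ℝ → ℂ) : ℂ :=
  (∫ r in a..b, g (r, α) * Complex.exp (Complex.I * (α : ℂ))) +
  (∫ θ in α..β, g (b, θ) * Complex.I * (b : ℂ) * Complex.exp (Complex.I * (θ : ℂ))) -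
  (∫ r in a..b, g (r, β) * Complex.exp (Complex.I * (β : ℂ))) -
  (∫ θ in α..β, g (a, θ) * Complex.I * (a : ℂ) * Complex.exp (Complex.I * (θ : ℂ)))

/-- `(r₀,θ₀)` is a logarithmic pole of order `k` of `f`, witnessed by the
neighborhood `U₀` and the polar-analytic function `g`. -/
def IsLogPole (f : ℝ × ℝ → ℂ) (p : ℝ × ℝ) (k : ℕ) (U₀ : Set (ℝ × ℝ))
    (g : ℝ × ℝ → ℂ) : Prop :=
  IsOpen U₀ ∧ p ∈ U₀ ∧ U₀ ⊆ polarHalfPlane ∧ 1 ≤ k ∧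
  PolarAnalyticOn f (U₀ \ {p}) ∧ PolarAnalyticOn g U₀ ∧ g p ≠ 0 ∧
  ∀ q ∈ U₀ \ {p},
    f q = g q / ((Real.log (q.1 / p.1) : ℂ) + Complex.I * ((q.2 - p.2 : ℝ) : ℂ)) ^ k

/-- The `c`-residue of a logarithmic pole of order `k` with witness `g`. -/
def cResidue (c : ℝ) (p : ℝ × ℝ) (k : ℕ) (g : ℝ × ℝ → ℂ) : ℂ :=
  ((p.1 ^ c : ℝ) : ℂ) * Complex.exp (Complex.I * (c : ℂ) * (p.2 : ℂ)) *
    ((mellinPolarDeriv c)^[k - 1] g p) / ((k - 1).factorial : ℂ)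

/-- The central Mellin difference `δ_{c,t} f`. -/
def centralMellinDiff (c t : ℝ) (f : ℝ × ℝ → ℂ) : ℝ × ℝ → ℂ :=
  fun q => ((t ^ c : ℝ) : ℂ) * f (t * q.1, q.2) - ((t ^ (-c) : ℝ) : ℂ) * f (t⁻¹ * q.1, q.2)


def polmap (q : ℝ × ℝ) : ℂ := (q.1 : ℂ) * Complex.exp (Complex.I * q.2)

def pinv (θ₀ : ℝ) (z : ℂ) : ℝ × ℝ :=
  (‖z‖, θ₀ + Complex.arg (z * Complex.exp (-(Complex.I * θ₀))))

lemma polmap_pinv {θ₀ : ℝ} (z : ℂ) : polmap (pinv θ₀ z) = z := by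
  set w : ℂ := z * Complex.exp (-(Complex.I * θ₀)) with hw
  have hwz : ‖w‖ = ‖z‖ := by
    simp [hw, Complex.norm_exp]
  unfold polmap pinv
  rw [show z * Complex.exp (-(Complex.I * (θ₀:ℂ))) = w from hw.symm, ← hwz]
  push_cast
  rw [mul_add, Complex.exp_add]
  have key : (‖w‖ : ℂ) * Complex.exp (Complex.I * (Complex.arg w : ℂ)) = w := by
    rw [mul_comm Complex.I]; exact Complex.norm_mul_exp_arg_mul_I w
  calc (‖w‖ : ℂ) * (Complex.exp (Complex.I * θ₀) * Complex.exp (Complex.I * (Complex.arg w : ℂ)))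
      = ((‖w‖ : ℂ) * Complex.exp (Complex.I * (Complex.arg w : ℂ))) * Complex.exp (Complex.I * θ₀) := by ring
    _ = w * Complex.exp (Complex.I * θ₀) := by rw [key]
    _ = z := by rw [hw]; rw [mul_assoc, ← Complex.exp_add]; simp

lemma pinv_polmap {θ₀ : ℝ} {q : ℝ × ℝ} (hq : 0 < q.1) (hθ : q.2 - θ₀ ∈ Set.Ioc (-Real.pi) Real.pi) :
    pinv θ₀ (polmap q) = q := by
  have he : polmap q * Complex.exp (-(Complex.I * θ₀)) = (q.1 : ℂ) * Complex.exp (((q.2 - θ₀ : ℝ) : ℂ) * Complex.I) := by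
    unfold polmap
    rw [mul_assoc, ← Complex.exp_add]
    push_cast
    ring_nf
  have habs : ‖polmap q‖ = q.1 := by
    unfold polmap
    rw [norm_mul, mul_comm Complex.I, Complex.norm_exp_ofReal_mul_I, Complex.norm_real, Real.norm_eq_abs,
      abs_of_pos hq, mul_one]
  have harg : Complex.arg (polmap q * Complex.exp (-(Complex.I * θ₀))) = q.2 - θ₀ := by
    rw [he, Complex.arg_real_mul _ hq, Complex.arg_exp_mul_I]
    rw [toIocMod_eq_self]
    exact ⟨hθ.1, by linarith [hθ.2]⟩
  unfold pinv
  rw [habs, harg]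
  simp

lemma pinv_continuousAt {θ₀ : ℝ} {z : ℂ} (hz : 0 < (z * Complex.exp (-(Complex.I * θ₀))).re) :
    ContinuousAt (pinv θ₀) z := by
  apply ContinuousAt.prodMk
  · exact continuous_norm.continuousAt
  · apply continuousAt_const.add
    have h1 : ContinuousAt (fun w : ℂ => w * Complex.exp (-(Complex.I * θ₀))) z :=
      (continuous_id.mul continuous_const).continuousAt
    exact ContinuousAt.comp (g := Complex.arg) (Complex.continuousAt_arg (Or.inl hz)) h1

lemma continuous_polmap : Continuous polmap := by
  unfold polmap
  fun_prop

lemma local_zero {D : Set (ℝ × ℝ)} (hD : IsOpen D) (hDH : D ⊆ polarHalfPlane)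
    {f : ℝ × ℝ → ℂ} (hf : PolarAnalyticOn f D) {p₀ : ℝ × ℝ} (hp₀ : p₀ ∈ D)
    {z : ℕ → ℝ × ℝ} (hzD : ∀ n, z n ∈ D) (hzero : ∀ n, f (z n) = 0)
    (hne : ∀ n, z n ≠ p₀) (hlim : Tendsto z atTop (nhds p₀)) :
    ∃ U : Set (ℝ × ℝ), IsOpen U ∧ p₀ ∈ U ∧ U ⊆ D ∧ ∀ q ∈ U, f q = 0 := by
  obtain ⟨r₀, θ₀⟩ := p₀
  have hr₀ : 0 < r₀ := hDH hp₀
  set z₀ : ℂ := polmap (r₀, θ₀) with hz₀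
  have hz₀e : z₀ * Complex.exp (-(Complex.I * θ₀)) = (r₀ : ℂ) := by
    rw [hz₀]; unfold polmap; rw [mul_assoc, ← Complex.exp_add]; simp
  have hψz₀ : pinv θ₀ z₀ = (r₀, θ₀) := by
    rw [hz₀]
    exact pinv_polmap hr₀ (by simp; constructor <;> [linarith [Real.pi_pos]; exact le_of_lt Real.pi_pos])
  -- continuity of pinv on a suitable ball
  have hre : ∀ z : ℂ, ‖z - z₀‖ < r₀ → 0 < (z * Complex.exp (-(Complex.I * θ₀))).re := by
    intro z hz
    have h1 : ‖z * Complex.exp (-(Complex.I * θ₀)) - (r₀ : ℂ)‖ = ‖z - z₀‖ := by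
      rw [← hz₀e, ← sub_mul, norm_mul, Complex.norm_exp]
      simp
    have h2 : |(z * Complex.exp (-(Complex.I * θ₀)) - (r₀ : ℂ)).re| ≤ ‖z - z₀‖ :=
      h1 ▸ Complex.abs_re_le_norm _
    have h3 : (z * Complex.exp (-(Complex.I * θ₀)) - (r₀ : ℂ)).re
        = (z * Complex.exp (-(Complex.I * θ₀))).re - r₀ := by simp
    rw [h3] at h2
    have := abs_le.1 h2
    linarith [this.1]
  have hcont₀ : ContinuousAt (pinv θ₀) z₀ := pinv_continuousAt (by rw [hz₀e]; simpa using hr₀)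
  have hDnhds : D ∈ nhds (pinv θ₀ z₀) := hD.mem_nhds (hψz₀ ▸ hp₀)
  obtain ⟨ε₁, hε₁, hball₁⟩ := Metric.mem_nhds_iff.1 (hcont₀ hDnhds)
  set ε : ℝ := min ε₁ r₀ with hεdef
  have hε : 0 < ε := lt_min hε₁ hr₀
  have hballD : ∀ z ∈ Metric.ball z₀ ε, pinv θ₀ z ∈ D := by
    intro z hz
    exact hball₁ (Metric.ball_subset_ball (min_le_left _ _) hz)
  have hballre : ∀ z ∈ Metric.ball z₀ ε, 0 < (z * Complex.exp (-(Complex.I * θ₀))).re := by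
    intro z hz
    refine hre z ?_
    have : dist z z₀ < ε := hz
    rw [Complex.dist_eq] at this
    exact lt_of_lt_of_le this (min_le_right _ _)
  -- the holomorphic realization
  set F : ℂ → ℂ := fun w => f (pinv θ₀ w) with hF
  have hFdiff : ∀ z₁ ∈ Metric.ball z₀ ε, DifferentiableAt ℂ F z₁ := by
    intro z₁ hz₁
    set q₁ : ℝ × ℝ := pinv θ₀ z₁ with hq₁
    have hq₁D : q₁ ∈ D := hballD z₁ hz₁
    obtain ⟨L, hL⟩ := hf q₁ hq₁D
    refine (HasDerivAt.differentiableAt (f' := L) ?_)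
    rw [hasDerivAt_iff_tendsto_slope]
    have hψ : Tendsto (pinv θ₀) (nhdsWithin z₁ {z₁}ᶜ) (nhdsWithin q₁ (D \ {q₁})) := by
      rw [tendsto_nhdsWithin_iff]
      constructor
      · exact ((pinv_continuousAt (hballre z₁ hz₁)).tendsto).mono_left nhdsWithin_le_nhds
      · have hballmem : Metric.ball z₀ ε ∈ nhdsWithin z₁ {z₁}ᶜ :=
          nhdsWithin_le_nhds (Metric.isOpen_ball.mem_nhds hz₁)
        filter_upwards [hballmem, self_mem_nhdsWithin] with w hw hwne
        refine ⟨hballD w hw, ?_⟩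
        intro hcontra
        apply hwne
        have : polmap (pinv θ₀ w) = polmap q₁ := by rw [Set.mem_singleton_iff.1 hcontra]
        rw [polmap_pinv, hq₁, polmap_pinv] at this
        exact this
    have key : ∀ w : ℂ, slope F z₁ w =
        (fun q : ℝ × ℝ => (f q - f q₁) /
          ((q.1 : ℂ) * Complex.exp (Complex.I * (q.2 : ℂ)) -
           ((q₁.1 : ℂ) * Complex.exp (Complex.I * (q₁.2 : ℂ))))) (pinv θ₀ w) := by
      intro w
      rw [slope_def_field]
      show (F w - F z₁) / (w - z₁) = (f (pinv θ₀ w) - f q₁) /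
        (polmap (pinv θ₀ w) - polmap q₁)
      rw [polmap_pinv, hq₁, polmap_pinv]
    rw [tendsto_congr key]
    exact hL.comp hψ
  have hFan : AnalyticOnNhd ℂ F (Metric.ball z₀ ε) :=
    (DifferentiableOn.analyticOnNhd
      (fun w hw => (hFdiff w hw).differentiableWithinAt) Metric.isOpen_ball)
  -- the zeros accumulate at z₀
  have hw : Tendsto (fun n => polmap (z n)) atTop (nhds z₀) := by
    rw [hz₀]
    exact (continuous_polmap.tendsto _).comp hlim
  have hsnd : Tendsto (fun n => (z n).2) atTop (nhds θ₀) :=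
    (continuous_snd.tendsto _).comp hlim
  have hangle : ∀ᶠ n in atTop, |(z n).2 - θ₀| < Real.pi := by
    have : ∀ᶠ x in nhds θ₀, |x - θ₀| < Real.pi := by
      have : Metric.ball θ₀ Real.pi ∈ nhds θ₀ := Metric.ball_mem_nhds _ Real.pi_pos
      filter_upwards [this] with x hx
      rwa [Metric.mem_ball, Real.dist_eq] at hx
    exact hsnd.eventually this
  have hroundtrip : ∀ᶠ n in atTop, pinv θ₀ (polmap (z n)) = z n := by
    filter_upwards [hangle] with n hn
    exact pinv_polmap (hDH (hzD n)) ⟨by cases abs_lt.1 hn; linarith, le_of_lt (abs_lt.1 hn).2⟩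
  have hwne : ∀ᶠ n in atTop, polmap (z n) ≠ z₀ := by
    filter_upwards [hroundtrip] with n hn hcontra
    exact hne n (by rw [← hn, hcontra, hψz₀])
  have hwzero : ∀ᶠ n in atTop, F (polmap (z n)) = 0 := by
    filter_upwards [hroundtrip] with n hn
    rw [hF]; simp only; rw [hn]; exact hzero n
  have hwt : Tendsto (fun n => polmap (z n)) atTop (nhdsWithin z₀ {z₀}ᶜ) := by
    rw [tendsto_nhdsWithin_iff]
    exact ⟨hw, hwne⟩
  have hfreq : ∃ᶠ ζ in nhdsWithin z₀ {z₀}ᶜ, F ζ = 0 := hwt.frequently hwzero.frequently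
  have hF0 : Set.EqOn F 0 (Metric.ball z₀ ε) :=
    hFan.eqOn_zero_of_preconnected_of_frequently_eq_zero
      (convex_ball z₀ ε).isPreconnected (Metric.mem_ball_self hε) hfreq
  -- conclude
  refine ⟨D ∩ polmap ⁻¹' (Metric.ball z₀ ε) ∩ Prod.snd ⁻¹' (Metric.ball θ₀ Real.pi), ?_, ?_, ?_, ?_⟩
  · exact ((hD.inter (Metric.isOpen_ball.preimage continuous_polmap)).inter
      (Metric.isOpen_ball.preimage continuous_snd))
  · refine ⟨⟨hp₀, ?_⟩, ?_⟩
    · show polmap (r₀, θ₀) ∈ Metric.ball z₀ ε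
      rw [← hz₀]
      exact Metric.mem_ball_self hε
    · show θ₀ ∈ Metric.ball θ₀ Real.pi
      exact Metric.mem_ball_self Real.pi_pos
  · exact fun q hq => hq.1.1
  · rintro q ⟨⟨hqD, hqball⟩, hqang⟩
    have hang : |q.2 - θ₀| < Real.pi := by
      simpa [Real.dist_eq] using hqang
    have h1 : pinv θ₀ (polmap q) = q :=
      pinv_polmap (hDH hqD) ⟨(abs_lt.1 hang).1, le_of_lt (abs_lt.1 hang).2⟩
    have h2 : F (polmap q) = 0 := hF0 hqball
    rw [hF] at h2; simp only at h2; rwa [h1] at h2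

/-- identity theorem for polar-analytic functions: a polar-analytic
function on a domain with an accumulation point of distinct zeros vanishes identically. -/
theorem statement3 (D : Set (ℝ × ℝ)) (hD : IsOpen D) (hDH : D ⊆ polarHalfPlane)
    (hconn : IsConnected D) (f : ℝ × ℝ → ℂ) (hf : PolarAnalyticOn f D)
    (p₀ : ℝ × ℝ) (hp₀ : p₀ ∈ D) (z : ℕ → ℝ × ℝ) (hzD : ∀ n, z n ∈ D)
    (hzero : ∀ n, f (z n) = 0) (hne : ∀ n, z n ≠ p₀)
    (hlim : Tendsto z atTop (nhds p₀)) :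
    ∀ q ∈ D, f q = 0 := by

  -- the set of points with a zero neighborhood
  set Z : Set (ℝ × ℝ) := {q | ∃ U : Set (ℝ × ℝ), IsOpen U ∧ q ∈ U ∧ U ⊆ D ∧ ∀ x ∈ U, f x = 0}
    with hZdef
  have hZopen : IsOpen Z := by
    rw [isOpen_iff_mem_nhds]
    rintro q ⟨U, hUo, hqU, hUD, hUz⟩
    exact Filter.mem_of_superset (hUo.mem_nhds hqU) (fun x hx => ⟨U, hUo, hx, hUD, hUz⟩)
  have hZD : Z ⊆ D := by rintro q ⟨U, _, hqU, hUD, _⟩; exact hUD hqU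
  have hZzero : ∀ q ∈ Z, f q = 0 := by rintro q ⟨U, _, hqU, _, hUz⟩; exact hUz q hqU
  have hp₀Z : p₀ ∈ Z := by
    obtain ⟨U, hUo, hmem, hUD, hUz⟩ := local_zero hD hDH hf hp₀ hzD hzero hne hlim
    exact ⟨U, hUo, hmem, hUD, hUz⟩
  have hacc : ∀ q ∈ D, q ∈ closure Z → q ∈ Z := by
    intro q hq hqc
    by_cases hqZ : q ∈ Z
    · exact hqZ
    · have hseq : ∀ n : ℕ, ∃ s, s ∈ Z ∧ dist s q < 1 / (n + 1) := by
        intro n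
        have := Metric.mem_closure_iff.1 hqc (1 / (n + 1)) (by positivity)
        obtain ⟨s, hs, hds⟩ := this
        exact ⟨s, hs, by rwa [dist_comm]⟩
      choose s hsZ hsd using hseq
      have hsD : ∀ n, s n ∈ D := fun n => hZD (hsZ n)
      have hszero : ∀ n, f (s n) = 0 := fun n => hZzero _ (hsZ n)
      have hsne : ∀ n, s n ≠ q := by
        intro n hcontra
        exact hqZ (hcontra ▸ hsZ n)
      have hslim : Tendsto s atTop (nhds q) := by
        rw [tendsto_iff_dist_tendsto_zero]
        apply squeeze_zero (fun n => dist_nonneg) (fun n => le_of_lt (hsd n))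
        exact tendsto_one_div_add_atTop_nhds_zero_nat
      obtain ⟨U, hUo, hmem, hUD, hUz⟩ := local_zero hD hDH hf hq hsD hszero hsne hslim
      exact ⟨U, hUo, hmem, hUD, hUz⟩
  have hDZ : D ⊆ Z := by
    intro q hq
    by_contra hqZ
    have hqV : q ∈ (closure Z)ᶜ := fun hc => hqZ (hacc q hq hc)
    have hcover : D ⊆ Z ∪ (closure Z)ᶜ := by
      intro x hx
      by_cases hxc : x ∈ closure Z
      · exact Or.inl (hacc x hx hxc)
      · exact Or.inr hxc
    have := hconn.isPreconnected Z (closure Z)ᶜ hZopen (isClosed_closure.isOpen_compl)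
      hcover ⟨p₀, hp₀, hp₀Z⟩ ⟨q, hq, hqV⟩
    obtain ⟨x, _, hxZ, hxV⟩ := this
    exact hxV (subset_closure hxZ)
  exact fun q hq => hZzero q (hDZ hq)


end
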